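/- Let f be a continuous piecewise linear function on a convex closed domain D ⊆ ℝ^d with components g_1,...,g_n (affine linear functions agreeing with f on the pieces). Then there exists a family {K_i}_{i∈I} of subsets of {1,...,n} such that f(x) = max_{i∈I} min_{j∈K_i} g_j(x) for all x ∈ D. -/
import Mathlib


/-- A closed domain in `ℝ^d`: the closure of a nonempty open set. -/
def IsClosedDomain {d : ℕ} (P : Set (Fin d → ℝ)) : Prop :=
  ∃ U : Set (Fin d → ℝ), U.Nonempty ∧ IsOpen U ∧ P = closure U

/-- `f` is piecewise linear on `D`: `D` is a finite union of closed domains on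
each of which `f` agrees with an affine linear function. -/
def IsPLOn {d : ℕ} (D : Set (Fin d → ℝ)) (f : (Fin d → ℝ) → ℝ) : Prop :=
  ∃ 𝒟 : Finset (Set (Fin d → ℝ)),
    (∀ P ∈ 𝒟, IsClosedDomain P) ∧ (⋃ P ∈ 𝒟, P) = D ∧
    ∀ P ∈ 𝒟, ∃ g : (Fin d → ℝ) →ᵃ[ℝ] ℝ, ∀ x ∈ P, f x = g x

/-- `f` coincides on `D` with the max-min lattice polynomial
`x ↦ ⋁_{K ∈ 𝒦} ⋀_{j ∈ K} g j x` for some nonempty family `𝒦` of nonempty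
subsets of `{1,…,n}`. -/
def MaxMinRep {d n : ℕ} (D : Set (Fin d → ℝ)) (g : Fin n → ((Fin d → ℝ) →ᵃ[ℝ] ℝ))
    (f : (Fin d → ℝ) → ℝ) : Prop :=
  ∃ (𝒦 : Finset (Finset (Fin n))) (h𝒦 : 𝒦.Nonempty) (hK : ∀ K ∈ 𝒦, K.Nonempty),
    ∀ x ∈ D, f x = 𝒦.attach.sup' (Finset.attach_nonempty_iff.mpr h𝒦)
      (fun K => K.1.inf' (hK K.1 K.2) (fun j => g j x))

lemma pl_key_lemma {d n : ℕ} {D : Set (Fin d → ℝ)} (hconv : Convex ℝ D)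
    {f : (Fin d → ℝ) → ℝ} (hf : ContinuousOn f D)
    {g : Fin n → ((Fin d → ℝ) →ᵃ[ℝ] ℝ)} {𝒟 : Finset (Set (Fin d → ℝ))}
    (hpieces : ∀ P ∈ 𝒟, IsClosedDomain P) (hcover : (⋃ P ∈ 𝒟, P) = D)
    (hagree : ∀ P ∈ 𝒟, ∃ j : Fin n, ∀ x ∈ P, f x = g j x)
    {x y : Fin d → ℝ} (hx : x ∈ D) (hy : y ∈ D) :
    ∃ j, f x ≤ g j x ∧ g j y ≤ f y := by
  classical
  set z : ℝ → (Fin d → ℝ) := fun s => AffineMap.lineMap x y s with hzdef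
  have hzc : Continuous z := AffineMap.lineMap_continuous
  have hzD : ∀ s ∈ Set.Icc (0:ℝ) 1, z s ∈ D := fun s hs =>
    hconv.lineMap_mem hx hy hs
  have hz0 : z 0 = x := AffineMap.lineMap_apply_zero x y
  have hz1 : z 1 = y := AffineMap.lineMap_apply_one x y
  have hgz : ∀ (j : Fin n) (s : ℝ), g j (z s) = s * (g j y - g j x) + g j x := by
    intro j s
    have h1 : g j (z s) = AffineMap.lineMap (g j x) (g j y) s :=
      AffineMap.apply_lineMap (g j) x y s
    rw [h1, AffineMap.lineMap_apply, smul_eq_mul, vsub_eq_sub, vadd_eq_add]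
    try ring
  have hfz : ContinuousOn (fun s => f (z s)) (Set.Icc 0 1) :=
    hf.comp hzc.continuousOn hzD
  set S : Set ℝ := {s | s ∈ Set.Icc (0:ℝ) 1 ∧ ∃ j, f x ≤ g j x ∧ g j (z s) ≤ f (z s)}
    with hSdef
  -- membership of x: some piece contains x
  have hmemD : ∀ w ∈ D, ∃ j, f w = g j w := by
    intro w hw
    rw [← hcover] at hw
    obtain ⟨P, hP, hwP⟩ := Set.mem_iUnion₂.mp hw
    obtain ⟨j, hj⟩ := hagree P hP
    exact ⟨j, hj w hwP⟩
  have h0S : (0:ℝ) ∈ S := by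
    obtain ⟨j, hj⟩ := hmemD x hx
    exact ⟨⟨le_refl 0, zero_le_one⟩, j, by rw [hz0]; exact ⟨hj.le, hj.ge⟩⟩
  have hSsub : S ⊆ Set.Icc 0 1 := fun s hs => hs.1
  have hSbdd : BddAbove S := (bddAbove_Icc).mono hSsub
  have hSclosed : IsClosed S := by
    have : S = ⋃ j : Fin n, {s | s ∈ Set.Icc (0:ℝ) 1 ∧ f x ≤ g j x ∧
        g j (z s) ≤ f (z s)} := by
      ext s
      simp only [hSdef, Set.mem_setOf_eq, Set.mem_iUnion]
      tauto
    rw [this]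
    apply isClosed_iUnion_of_finite
    intro j
    by_cases hj : f x ≤ g j x
    · have : {s | s ∈ Set.Icc (0:ℝ) 1 ∧ f x ≤ g j x ∧ g j (z s) ≤ f (z s)} =
          Set.Icc (0:ℝ) 1 ∩ (fun s => g j (z s) - f (z s)) ⁻¹' Set.Iic 0 := by
        ext s
        simp only [Set.mem_setOf_eq, Set.mem_inter_iff, Set.mem_preimage, Set.mem_Iic]
        constructor
        · rintro ⟨h1, -, h3⟩; exact ⟨h1, by linarith⟩
        · rintro ⟨h1, h2⟩; exact ⟨h1, hj, by linarith⟩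
      rw [this]
      exact ((((g j).continuous_of_finiteDimensional.comp hzc)).continuousOn.sub hfz).preimage_isClosed_of_isClosed
        isClosed_Icc isClosed_Iic
    · have : {s | s ∈ Set.Icc (0:ℝ) 1 ∧ f x ≤ g j x ∧ g j (z s) ≤ f (z s)} = ∅ := by
        ext s; simp only [Set.mem_setOf_eq, Set.mem_empty_iff_false, iff_false]
        rintro ⟨-, h2, -⟩; exact hj h2
      rw [this]; exact isClosed_empty
  set t : ℝ := sSup S with htdef
  have htS : t ∈ S := hSclosed.csSup_mem ⟨0, h0S⟩ hSbdd
  obtain ⟨⟨ht0, ht1⟩, j0, hj0x, hj0t⟩ := htS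
  by_cases hteq : t = 1
  · exact ⟨j0, hj0x, by rwa [hteq, hz1] at hj0t⟩
  have htlt : t < 1 := lt_of_le_of_ne ht1 hteq
  -- cover (t,1] by pieces
  set T : Set (Fin d → ℝ) → Set ℝ := fun P => {s | s ∈ Set.Ioc t 1 ∧ z s ∈ P} with hTdef
  have hcov2 : Set.Ioc t 1 ⊆ ⋃ P ∈ (𝒟 : Set (Set (Fin d → ℝ))), T P := by
    intro s hs
    have hsD : z s ∈ D := hzD s ⟨le_trans ht0 hs.1.le, hs.2⟩
    rw [← hcover] at hsD
    obtain ⟨P, hP, hsP⟩ := Set.mem_iUnion₂.mp hsD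
    exact Set.mem_iUnion₂.mpr ⟨P, hP, hs, hsP⟩
  have htcl : t ∈ closure (⋃ P ∈ (𝒟 : Set (Set (Fin d → ℝ))), T P) := by
    apply closure_mono hcov2
    rw [closure_Ioc (ne_of_lt htlt)]
    exact ⟨le_refl t, ht1⟩
  rw [𝒟.finite_toSet.closure_biUnion] at htcl
  obtain ⟨P, hP, htP⟩ := Set.mem_iUnion₂.mp htcl
  have hP𝒟 : P ∈ 𝒟 := hP
  have hPclosed : IsClosed P := by
    obtain ⟨U, -, -, rfl⟩ := hpieces P hP𝒟
    exact isClosed_closure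
  -- z t ∈ P
  have hpP : z t ∈ P := by
    have h1 : z t ∈ closure (z '' T P) := by
      have := image_closure_subset_closure_image hzc (s := T P)
      exact this ⟨t, htP, rfl⟩
    have h2 : z '' T P ⊆ P := by rintro - ⟨s, hs, rfl⟩; exact hs.2
    exact hPclosed.closure_subset_iff.mpr h2 h1
  obtain ⟨j, hj⟩ := hagree P hP𝒟
  have hfp : f (z t) = g j (z t) := hj (z t) hpP
  -- pick t' ∈ T P
  obtain ⟨t', ht'Ioc, ht'P⟩ : (T P).Nonempty := by
    rcases Set.eq_empty_or_nonempty (T P) with h | h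
    · rw [h, closure_empty] at htP; exact absurd htP (Set.notMem_empty t)
    · exact h
  have htt' : t < t' := ht'Ioc.1
  have hft' : f (z t') = g j (z t') := hj (z t') ht'P
  have ht'Icc : t' ∈ Set.Icc (0:ℝ) 1 := ⟨le_trans ht0 htt'.le, ht'Ioc.2⟩
  by_cases hc : g j0 (z t') ≤ f (z t')
  · have : t' ∈ S := ⟨ht'Icc, j0, hj0x, hc⟩
    exact absurd (le_csSup hSbdd this) (not_le.mpr htt')
  · push_neg at hc
    -- comparison of affine functions along the line
    have e1 : t * (g j y - g j x) + g j x ≥ t * (g j0 y - g j0 x) + g j0 x := by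
      have := hgz j t; have := hgz j0 t
      calc t * (g j y - g j x) + g j x = g j (z t) := (hgz j t).symm
        _ = f (z t) := hfp.symm
        _ ≥ g j0 (z t) := hj0t
        _ = t * (g j0 y - g j0 x) + g j0 x := hgz j0 t
    have e2 : t' * (g j y - g j x) + g j x < t' * (g j0 y - g j0 x) + g j0 x := by
      calc t' * (g j y - g j x) + g j x = g j (z t') := (hgz j t').symm
        _ = f (z t') := hft'.symm
        _ < g j0 (z t') := hc
        _ = t' * (g j0 y - g j0 x) + g j0 x := hgz j0 t'
    have hax : g j0 x ≤ g j x := by nlinarith [sub_pos.mpr htt']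
    have : t' ∈ S := ⟨ht'Icc, j, le_trans hj0x hax, le_of_eq hft'.symm⟩
    exact absurd (le_csSup hSbdd this) (not_le.mpr htt')

/-- A continuous piecewise linear function on a convex closed domain `D ⊆ ℝ^d`
with components `g 1, …, g n` is a max-min lattice polynomial in its components. -/
theorem pl_maxMinRep {d n : ℕ} (D : Set (Fin d → ℝ)) (hconv : Convex ℝ D)
    (hdom : IsClosedDomain D) (f : (Fin d → ℝ) → ℝ) (hf : ContinuousOn f D)
    (g : Fin n → ((Fin d → ℝ) →ᵃ[ℝ] ℝ)) (𝒟 : Finset (Set (Fin d → ℝ)))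
    (hpieces : ∀ P ∈ 𝒟, IsClosedDomain P) (hcover : (⋃ P ∈ 𝒟, P) = D)
    (hagree : ∀ P ∈ 𝒟, ∃ j : Fin n, ∀ x ∈ P, f x = g j x)
    (hcomp : ∀ j : Fin n, ∃ P ∈ 𝒟, ∀ x ∈ P, f x = g j x) :
    MaxMinRep D g f := by
  classical
  obtain ⟨U, hUne, hUo, hDU⟩ := hdom
  obtain ⟨x₀, hx₀U⟩ := hUne
  have hx₀ : x₀ ∈ D := hDU ▸ subset_closure hx₀U
  set Kx : (Fin d → ℝ) → Finset (Fin n) :=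
    fun x => Finset.univ.filter (fun j => f x ≤ g j x) with hKxdef
  have hKxne : ∀ x ∈ D, (Kx x).Nonempty := by
    intro x hxD
    rw [← hcover] at hxD
    obtain ⟨P, hP, hxP⟩ := Set.mem_iUnion₂.mp hxD
    obtain ⟨j, hj⟩ := hagree P hP
    exact ⟨j, Finset.mem_filter.mpr ⟨Finset.mem_univ j, (hj x hxP).le⟩⟩
  set 𝒦 : Finset (Finset (Fin n)) :=
    Finset.univ.powerset.filter (fun K => ∃ x ∈ D, K = Kx x) with h𝒦def
  have hmem𝒦 : ∀ x ∈ D, Kx x ∈ 𝒦 := by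
    intro x hxD
    exact Finset.mem_filter.mpr ⟨Finset.mem_powerset.mpr (Finset.subset_univ _),
      ⟨x, hxD, rfl⟩⟩
  have h𝒦ne : 𝒦.Nonempty := ⟨Kx x₀, hmem𝒦 x₀ hx₀⟩
  have hKne : ∀ K ∈ 𝒦, K.Nonempty := by
    intro K hK
    obtain ⟨-, x, hxD, rfl⟩ := Finset.mem_filter.mp hK
    exact hKxne x hxD
  refine ⟨𝒦, h𝒦ne, hKne, ?_⟩
  intro x hxD
  apply le_antisymm
  · refine Finset.le_sup'_of_le _
      (b := (⟨Kx x, hmem𝒦 x hxD⟩ : {K // K ∈ 𝒦})) (Finset.mem_attach _ _) ?_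
    apply Finset.le_inf'
    intro j hj
    exact (Finset.mem_filter.mp hj).2
  · apply Finset.sup'_le
    rintro ⟨K, hK⟩ -
    obtain ⟨-, y, hyD, hKy⟩ := Finset.mem_filter.mp hK
    obtain ⟨j, hjy, hjx⟩ := pl_key_lemma hconv hf hpieces hcover hagree hyD hxD
    have hjK : j ∈ K := by
      rw [hKy]; exact Finset.mem_filter.mpr ⟨Finset.mem_univ j, hjy⟩
    exact Finset.inf'_le_of_le _ (b := j) hjK hjx
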